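/- Let C ≥ 0 and let u : ℝᴺ → ℝᴺ be a continuous vector field with ‖u(z)‖ ≤ C for all z ∈ ℝᴺ. Set L := (1 + C)²/4. Then for all x, y, a, b ∈ ℝᴺ, |Q_u(x, y) − Q_u(a, b)| ≤ L·(‖a − x‖ + ‖b − y‖). In particular, for each fixed bounded continuous u, the quasipotential Q_u is Lipschitz continuous in its two endpoint arguments. -/

import Mathlib

open MeasureTheory Set

/-- A path `φ : [T₁,T₂] → ℝᴺ` is admissible with derivative `g` if `g` is measurable with
square-integrable norm on `[T₁,T₂]` and `φ(t) = φ(T₁) + ∫_{T₁}^t g(s) ds` on `[T₁,T₂]`. -/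
def IsAdmissiblePath (N : ℕ) (T₁ T₂ : ℝ)
    (φ g : ℝ → EuclideanSpace ℝ (Fin N)) : Prop :=
  Measurable g ∧
  MeasureTheory.IntegrableOn (fun t => ‖g t‖ ^ 2) (Set.Icc T₁ T₂) ∧
  ∀ t ∈ Set.Icc T₁ T₂, φ t = φ T₁ + ∫ s in T₁..t, g s

/-- The Freidlin–Wentzell quasipotential of a vector field `u` between `x` and `y`. -/
noncomputable def quasipotential (N : ℕ)
    (u : EuclideanSpace ℝ (Fin N) → EuclideanSpace ℝ (Fin N))
    (x y : EuclideanSpace ℝ (Fin N)) : ℝ :=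
  sInf {a : ℝ | ∃ T : ℝ, 0 < T ∧ ∃ φ g : ℝ → EuclideanSpace ℝ (Fin N),
    IsAdmissiblePath N 0 T φ g ∧ φ 0 = x ∧ φ T = y ∧
    a = (1 / 4) * ∫ t in Set.Icc 0 T, ‖g t - u (φ t)‖ ^ 2}

def QSet (N : ℕ) (u : EuclideanSpace ℝ (Fin N) → EuclideanSpace ℝ (Fin N))
    (x y : EuclideanSpace ℝ (Fin N)) : Set ℝ :=
  {a : ℝ | ∃ T : ℝ, 0 < T ∧ ∃ φ g : ℝ → EuclideanSpace ℝ (Fin N),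
    IsAdmissiblePath N 0 T φ g ∧ φ 0 = x ∧ φ T = y ∧
    a = (1 / 4) * ∫ t in Set.Icc 0 T, ‖g t - u (φ t)‖ ^ 2}

variable {N : ℕ}

lemma aux_ii {f : ℝ → EuclideanSpace ℝ (Fin N)} {A B : ℝ} (h : A ≤ B)
    (hf : IntegrableOn f (Icc A B)) : IntervalIntegrable f volume A B := by
  rw [← uIcc_of_le h] at hf; exact hf.intervalIntegrable

lemma aux_iiR {f : ℝ → ℝ} {A B : ℝ} (h : A ≤ B)
    (hf : IntegrableOn f (Icc A B)) : IntervalIntegrable f volume A B := by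
  rw [← uIcc_of_le h] at hf; exact hf.intervalIntegrable

lemma aux_split {f : ℝ → ℝ} {A B D : ℝ} (hAB : A ≤ B) (hBD : B ≤ D)
    (h1 : IntegrableOn f (Icc A B)) (h2 : IntegrableOn f (Icc B D)) :
    ∫ t in Icc A D, f t = (∫ t in Icc A B, f t) + ∫ t in Icc B D, f t := by
  rw [integral_Icc_eq_integral_Ioc, integral_Icc_eq_integral_Ioc, integral_Icc_eq_integral_Ioc,
    ← intervalIntegral.integral_of_le hAB, ← intervalIntegral.integral_of_le hBD,
    ← intervalIntegral.integral_of_le (hAB.trans hBD)]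
  exact (intervalIntegral.integral_add_adjacent_intervals (aux_iiR hAB h1) (aux_iiR hBD h2)).symm

lemma aux_ne (T : ℝ) : ∀ᵐ t : ℝ, t ≠ T := by
  have : (volume : Measure ℝ) {T} = 0 := measure_singleton T
  rw [ae_iff]; simpa using this

lemma aux_int_of_sq {g : ℝ → EuclideanSpace ℝ (Fin N)} {A B : ℝ} (hg : Measurable g)
    (h2 : IntegrableOn (fun t => ‖g t‖ ^ 2) (Icc A B)) : IntegrableOn g (Icc A B) := by
  have hb : IntegrableOn (fun t => 1 + ‖g t‖ ^ 2) (Icc A B) :=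
    (integrableOn_const measure_Icc_lt_top.ne).add h2
  refine Integrable.mono' hb hg.aestronglyMeasurable.restrict ?_
  filter_upwards with t
  rcases le_or_gt ‖g t‖ 1 with h | h
  · nlinarith [sq_nonneg (‖g t‖)]
  · nlinarith [norm_nonneg (g t)]

lemma aux_action_int {u : EuclideanSpace ℝ (Fin N) → EuclideanSpace ℝ (Fin N)}
    (hu : Continuous u) {C : ℝ} (hbound : ∀ z, ‖u z‖ ≤ C)
    {φ g : ℝ → EuclideanSpace ℝ (Fin N)} {T : ℝ} (hT : 0 ≤ T)
    (hadm : IsAdmissiblePath N 0 T φ g) :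
    IntegrableOn (fun t => ‖g t - u (φ t)‖ ^ 2) (Icc 0 T) := by
  obtain ⟨hgm, hg2, hφ⟩ := hadm
  have hgi : IntegrableOn g (Icc 0 T) := aux_int_of_sq hgm hg2
  have hψc : ContinuousOn (fun t => φ 0 + ∫ s in (0:ℝ)..t, g s) (Icc 0 T) := by
    refine continuousOn_const.add ?_
    have := intervalIntegral.continuousOn_primitive_interval
      (μ := volume) (a := (0:ℝ)) (b := T) (f := g) (by rwa [uIcc_of_le hT])
    rwa [uIcc_of_le hT] at this
  have hae : AEStronglyMeasurable (fun t => u (φ t)) (volume.restrict (Icc 0 T)) := by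
    have h1 : ContinuousOn (fun t => u (φ 0 + ∫ s in (0:ℝ)..t, g s)) (Icc 0 T) :=
      hu.comp_continuousOn hψc
    refine (h1.aestronglyMeasurable measurableSet_Icc).congr ?_
    filter_upwards [ae_restrict_mem measurableSet_Icc] with t ht
    rw [← hφ t ht]
  have hbint : IntegrableOn (fun t => 2 * ‖g t‖ ^ 2 + 2 * C ^ 2) (Icc 0 T) :=
    (hg2.const_mul 2).add (integrableOn_const measure_Icc_lt_top.ne)
  refine Integrable.mono' hbint ?_ ?_
  · exact ((hgm.aestronglyMeasurable.restrict.sub hae).norm.pow 2)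
  · filter_upwards with t
    have h1 : ‖g t - u (φ t)‖ ≤ ‖g t‖ + C :=
      (norm_sub_le _ _).trans (by linarith [hbound (φ t)])
    rw [Real.norm_eq_abs, abs_of_nonneg (by positivity)]
    have h2 := pow_le_pow_left₀ (norm_nonneg (g t - u (φ t))) h1 2
    nlinarith [sq_nonneg (‖g t‖ - C)]

lemma aux_append {u : EuclideanSpace ℝ (Fin N) → EuclideanSpace ℝ (Fin N)}
    (hu : Continuous u) {C : ℝ} (hC : 0 ≤ C) (hbound : ∀ z, ‖u z‖ ≤ C)
    (x y b : EuclideanSpace ℝ (Fin N)) :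
    ∀ m ∈ QSet N u x y, ∃ m' ∈ QSet N u x b, m' ≤ m + (1 + C) ^ 2 / 4 * ‖b - y‖ := by
  rintro m ⟨T, hT, φ, g, hadm, hx, hy, rfl⟩
  obtain ⟨hgm, hg2, hφ⟩ := hadm
  set d := ‖b - y‖ with hd
  have hd0 : (0:ℝ) ≤ d := norm_nonneg _
  set w : EuclideanSpace ℝ (Fin N) := if h : d = 0 then 0 else d⁻¹ • (b - y) with hw
  have hw1 : ‖w‖ ≤ 1 := by
    rw [hw]; split_ifs with h
    · simp
    · rw [norm_smul, norm_inv, Real.norm_eq_abs, abs_of_nonneg hd0, ← hd,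
        inv_mul_cancel₀ h]
  have hdw : d • w = b - y := by
    rw [hw]; split_ifs with h
    · have hby : b - y = 0 := by rwa [← norm_eq_zero, ← hd]
      simp [h, hby]
    · rw [smul_smul, mul_inv_cancel₀ h, one_smul]
  set T' := T + d with hT'
  have hTT' : T ≤ T' := by simp [hT', hd0]
  have hT0 : (0:ℝ) ≤ T := hT.le
  have hT'0 : 0 < T' := by linarith
  set g' : ℝ → EuclideanSpace ℝ (Fin N) := fun t => if t < T then g t else w with hg'
  set φ' : ℝ → EuclideanSpace ℝ (Fin N) := fun t => x + ∫ s in (0:ℝ)..t, g' s with hφ'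
  have hg'm : Measurable g' :=
    Measurable.ite (measurableSet_lt measurable_id measurable_const) hgm measurable_const
  have hg'T : ∀ t, T ≤ t → g' t = w := fun t ht => if_neg (not_lt.2 ht)
  have haegg' : g' =ᵐ[volume.restrict (Icc 0 T)] g := by
    filter_upwards [ae_restrict_of_ae (aux_ne T), ae_restrict_mem measurableSet_Icc]
      with t h1 h2
    exact if_pos (lt_of_le_of_ne h2.2 h1)
  have hgI : IntegrableOn g (Icc 0 T) := aux_int_of_sq hgm hg2
  have hII1 : IntegrableOn g' (Icc 0 T) := hgI.congr_fun_ae haegg'.symm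
  have hII2 : IntegrableOn g' (Icc T T') :=
    (integrableOn_const measure_Icc_lt_top.ne).congr_fun
      (fun t ht => (hg'T t ht.1).symm) measurableSet_Icc
  have hsq1 : IntegrableOn (fun t => ‖g' t‖ ^ 2) (Icc 0 T) := by
    refine hg2.congr_fun_ae ?_
    filter_upwards [haegg'] with t h1
    rw [h1]
  have hsq2 : IntegrableOn (fun t => ‖g' t‖ ^ 2) (Icc T T') :=
    (integrableOn_const (C := ‖w‖ ^ 2) measure_Icc_lt_top.ne).congr_fun
      (fun t ht => by rw [hg'T t ht.1]) measurableSet_Icc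
  have hsq : IntegrableOn (fun t => ‖g' t‖ ^ 2) (Icc 0 T') :=
    (hsq1.union hsq2).mono_set Icc_subset_Icc_union_Icc
  -- φ' agrees with φ on [0, T]
  have hφ'eq1 : ∀ t ∈ Icc 0 T, φ' t = φ t := by
    intro t ht
    have hi : ∫ s in (0:ℝ)..t, g' s = ∫ s in (0:ℝ)..t, g s := by
      apply intervalIntegral.integral_congr_ae
      filter_upwards [aux_ne T] with s hs hmem
      rw [uIoc_of_le ht.1] at hmem
      exact if_pos (lt_of_le_of_ne (hmem.2.trans ht.2) hs)
    show x + ∫ s in (0:ℝ)..t, g' s = φ t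
    rw [hi, hφ t ht, hx]
  have hφ'eq2 : ∀ t ∈ Icc T T', φ' t = y + (t - T) • w := by
    intro t ht
    have hsplit : ∫ s in (0:ℝ)..t, g' s = (∫ s in (0:ℝ)..T, g' s) + ∫ s in T..t, g' s :=
      (intervalIntegral.integral_add_adjacent_intervals (aux_ii hT0 hII1)
        (aux_ii ht.1 (hII2.mono_set (Icc_subset_Icc le_rfl ht.2)))).symm
    have h2' : ∫ s in T..t, g' s = (t - T) • w := by
      rw [intervalIntegral.integral_congr (g := fun _ => w)
        (fun s hs => hg'T s (by rw [uIcc_of_le ht.1] at hs; exact hs.1)),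
        intervalIntegral.integral_const]
    have hT1 : φ' T = y := by rw [hφ'eq1 T (right_mem_Icc.2 hT0), hy]
    calc φ' t = (x + ∫ s in (0:ℝ)..T, g' s) + ∫ s in T..t, g' s := by
          show x + ∫ s in (0:ℝ)..t, g' s = _
          rw [hsplit]; abel
      _ = φ' T + (t - T) • w := by rw [h2']
      _ = y + (t - T) • w := by rw [hT1]
  have hφ'0 : φ' 0 = x := by simp [hφ']
  have hφ'T' : φ' T' = b := by
    rw [hφ'eq2 T' (right_mem_Icc.2 hTT')]
    have : T' - T = d := by rw [hT']; ring
    rw [this, hdw]; abel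
  have hadm' : IsAdmissiblePath N 0 T' φ' g' := by
    refine ⟨hg'm, hsq, fun t _ => ?_⟩
    rw [hφ'0]
  -- action integrals
  have hFint1 : IntegrableOn (fun t => ‖g' t - u (φ' t)‖ ^ 2) (Icc 0 T) := by
    refine (aux_action_int hu hbound hT0 ⟨hgm, hg2, hφ⟩).congr_fun_ae ?_
    filter_upwards [haegg', ae_restrict_mem measurableSet_Icc] with t h1 h2
    rw [h1, hφ'eq1 t h2]
  have heq2 : EqOn (fun t => ‖g' t - u (φ' t)‖ ^ 2)
      (fun t => ‖w - u (y + (t - T) • w)‖ ^ 2) (Icc T T') := by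
    intro t ht
    simp only
    rw [hg'T t ht.1, hφ'eq2 t ht]
  have hcont2 : Continuous fun t => ‖w - u (y + (t - T) • w)‖ ^ 2 := by
    fun_prop
  have hFint2 : IntegrableOn (fun t => ‖g' t - u (φ' t)‖ ^ 2) (Icc T T') :=
    (hcont2.integrableOn_Icc).congr_fun (fun t ht => (heq2 ht).symm) measurableSet_Icc
  have hA1 : ∫ t in Icc 0 T, ‖g' t - u (φ' t)‖ ^ 2 = ∫ t in Icc 0 T, ‖g t - u (φ t)‖ ^ 2 := by
    refine setIntegral_congr_ae measurableSet_Icc ?_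
    filter_upwards [aux_ne T] with t h1 h2
    rw [show g' t = g t from if_pos (lt_of_le_of_ne h2.2 h1), hφ'eq1 t h2]
  have hA2 : ∫ t in Icc T T', ‖g' t - u (φ' t)‖ ^ 2 ≤ (1 + C) ^ 2 * d := by
    rw [setIntegral_congr_fun measurableSet_Icc heq2]
    calc ∫ t in Icc T T', ‖w - u (y + (t - T) • w)‖ ^ 2
        ≤ ∫ _t in Icc T T', (1 + C) ^ 2 := by
          refine setIntegral_mono_on hcont2.integrableOn_Icc
            (integrableOn_const measure_Icc_lt_top.ne) measurableSet_Icc ?_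
          intro t _
          have h1 : ‖w - u (y + (t - T) • w)‖ ≤ 1 + C :=
            (norm_sub_le _ _).trans (by linarith [hbound (y + (t - T) • w)])
          exact pow_le_pow_left₀ (norm_nonneg _) h1 2
      _ = (1 + C) ^ 2 * d := by
          rw [setIntegral_const, Real.volume_real_Icc_of_le hTT', smul_eq_mul]
          rw [show T' - T = d by rw [hT']; ring, mul_comm]
  have hsplitA : ∫ t in Icc 0 T', ‖g' t - u (φ' t)‖ ^ 2 =
      (∫ t in Icc 0 T, ‖g' t - u (φ' t)‖ ^ 2) + ∫ t in Icc T T', ‖g' t - u (φ' t)‖ ^ 2 :=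
    aux_split hT0 hTT' hFint1 hFint2
  refine ⟨(1 / 4) * ∫ t in Icc 0 T', ‖g' t - u (φ' t)‖ ^ 2,
    ⟨T', hT'0, φ', g', hadm', hφ'0, hφ'T', rfl⟩, ?_⟩
  rw [hsplitA, hA1]
  linarith [hA2]

lemma aux_prepend {u : EuclideanSpace ℝ (Fin N) → EuclideanSpace ℝ (Fin N)}
    (hu : Continuous u) {C : ℝ} (hC : 0 ≤ C) (hbound : ∀ z, ‖u z‖ ≤ C)
    (x y a : EuclideanSpace ℝ (Fin N)) :
    ∀ m ∈ QSet N u x y, ∃ m' ∈ QSet N u a y, m' ≤ m + (1 + C) ^ 2 / 4 * ‖x - a‖ := by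
  rintro m ⟨T, hT, φ, g, hadm, hx, hy, rfl⟩
  obtain ⟨hgm, hg2, hφ⟩ := hadm
  set d := ‖x - a‖ with hd
  have hd0 : (0:ℝ) ≤ d := norm_nonneg _
  set v : EuclideanSpace ℝ (Fin N) := if h : d = 0 then 0 else d⁻¹ • (x - a) with hv
  have hv1 : ‖v‖ ≤ 1 := by
    rw [hv]; split_ifs with h
    · simp
    · rw [norm_smul, norm_inv, Real.norm_eq_abs, abs_of_nonneg hd0, ← hd,
        inv_mul_cancel₀ h]
  have hdv : d • v = x - a := by
    rw [hv]; split_ifs with h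
    · have hxa : x - a = 0 := by rwa [← norm_eq_zero, ← hd]
      simp [h, hxa]
    · rw [smul_smul, mul_inv_cancel₀ h, one_smul]
  set T' := T + d with hT'
  have hT0 : (0:ℝ) ≤ T := hT.le
  have hdT' : d ≤ T' := by simp [hT', hT0]
  have hT'0 : 0 < T' := by linarith
  set g' : ℝ → EuclideanSpace ℝ (Fin N) := fun t => if t < d then v else g (t - d) with hg'
  set φ' : ℝ → EuclideanSpace ℝ (Fin N) := fun t => a + ∫ s in (0:ℝ)..t, g' s with hφ'
  have hg'm : Measurable g' :=
    Measurable.ite (measurableSet_lt measurable_id measurable_const) measurable_const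
      (hgm.comp (measurable_id.sub measurable_const))
  have hg'd : ∀ t, d ≤ t → g' t = g (t - d) := fun t ht => if_neg (not_lt.2 ht)
  have hgI : IntegrableOn g (Icc 0 T) := aux_int_of_sq hgm hg2
  -- translated integrabilities on [d, T']
  have htr : IntegrableOn (fun t => g (t - d)) (Icc d T') := by
    have h1 := (aux_ii hT0 hgI).comp_sub_right d
    rw [zero_add] at h1
    rw [← intervalIntegrable_iff_integrableOn_Icc_of_le hdT']
    rwa [show T' = T + d from rfl]
  have hsqtr : IntegrableOn (fun t => ‖g (t - d)‖ ^ 2) (Icc d T') := by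
    have h1 := (aux_iiR hT0 hg2).comp_sub_right d
    rw [zero_add] at h1
    rw [← intervalIntegrable_iff_integrableOn_Icc_of_le hdT']
    rwa [show T' = T + d from rfl]
  have haec : g' =ᵐ[volume.restrict (Icc 0 d)] fun _ => v := by
    filter_upwards [ae_restrict_of_ae (aux_ne d), ae_restrict_mem measurableSet_Icc]
      with t h1 h2
    exact if_pos (lt_of_le_of_ne h2.2 h1)
  have hII1 : IntegrableOn g' (Icc 0 d) :=
    (integrableOn_const measure_Icc_lt_top.ne).congr_fun_ae haec.symm
  have hII2 : IntegrableOn g' (Icc d T') :=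
    htr.congr_fun (fun t ht => (hg'd t ht.1).symm) measurableSet_Icc
  have hsq1 : IntegrableOn (fun t => ‖g' t‖ ^ 2) (Icc 0 d) := by
    refine (integrableOn_const (C := ‖v‖ ^ 2) measure_Icc_lt_top.ne)
      |>.congr_fun_ae ?_
    filter_upwards [haec] with t h1
    rw [h1]
  have hsq2 : IntegrableOn (fun t => ‖g' t‖ ^ 2) (Icc d T') :=
    hsqtr.congr_fun (fun t ht => by rw [hg'd t ht.1]) measurableSet_Icc
  have hsq : IntegrableOn (fun t => ‖g' t‖ ^ 2) (Icc 0 T') :=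
    (hsq1.union hsq2).mono_set Icc_subset_Icc_union_Icc
  -- φ' on [0, d]
  have hφ'eq1 : ∀ t ∈ Icc 0 d, φ' t = a + t • v := by
    intro t ht
    have hi : ∫ s in (0:ℝ)..t, g' s = ∫ s in (0:ℝ)..t, (fun _ => v) s := by
      apply intervalIntegral.integral_congr_ae
      filter_upwards [aux_ne d] with s hs hmem
      rw [uIoc_of_le ht.1] at hmem
      exact if_pos (lt_of_le_of_ne (hmem.2.trans ht.2) hs)
    show a + ∫ s in (0:ℝ)..t, g' s = a + t • v
    rw [hi, intervalIntegral.integral_const, sub_zero]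
  have hφ'd : φ' d = x := by
    rw [hφ'eq1 d (right_mem_Icc.2 hd0), hdv]; abel
  have hφ'eq2 : ∀ t ∈ Icc d T', φ' t = φ (t - d) := by
    intro t ht
    have hsplit : ∫ s in (0:ℝ)..t, g' s = (∫ s in (0:ℝ)..d, g' s) + ∫ s in d..t, g' s :=
      (intervalIntegral.integral_add_adjacent_intervals (aux_ii hd0 hII1)
        (aux_ii ht.1 (hII2.mono_set (Icc_subset_Icc le_rfl ht.2)))).symm
    have htd : t - d ∈ Icc (0:ℝ) T := ⟨by linarith [ht.1], by
      have := ht.2; rw [hT'] at this; linarith⟩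
    have h2' : ∫ s in d..t, g' s = φ (t - d) - x := by
      rw [intervalIntegral.integral_congr (g := fun s => g (s - d))
        (fun s hs => hg'd s (by rw [uIcc_of_le ht.1] at hs; exact hs.1))]
      rw [intervalIntegral.integral_comp_sub_right (fun s => g s) d, sub_self]
      rw [hφ (t - d) htd, hx]; abel
    calc φ' t = (a + ∫ s in (0:ℝ)..d, g' s) + ∫ s in d..t, g' s := by
          show a + ∫ s in (0:ℝ)..t, g' s = _
          rw [hsplit]; abel
      _ = φ' d + ∫ s in d..t, g' s := rfl
      _ = x + (φ (t - d) - x) := by rw [hφ'd, h2']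
      _ = φ (t - d) := by abel
  have hφ'0 : φ' 0 = a := by simp [hφ']
  have hφ'T' : φ' T' = y := by
    rw [hφ'eq2 T' (right_mem_Icc.2 hdT'), show T' - d = T by rw [hT']; ring, hy]
  have hadm' : IsAdmissiblePath N 0 T' φ' g' := ⟨hg'm, hsq, fun t _ => by rw [hφ'0]⟩
  -- action
  have hcont1 : Continuous fun t : ℝ => ‖v - u (a + t • v)‖ ^ 2 := by fun_prop
  have haeF1 : ∀ᵐ t : ℝ, t ∈ Icc 0 d →
      ‖g' t - u (φ' t)‖ ^ 2 = ‖v - u (a + t • v)‖ ^ 2 := by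
    filter_upwards [aux_ne d] with t h1 h2
    rw [show g' t = v from if_pos (lt_of_le_of_ne h2.2 h1), hφ'eq1 t h2]
  have hFint1 : IntegrableOn (fun t => ‖g' t - u (φ' t)‖ ^ 2) (Icc 0 d) :=
    hcont1.integrableOn_Icc.congr_fun_ae
      (((ae_restrict_iff' measurableSet_Icc).2 haeF1).mono fun t h => h.symm)
  have hA1 : ∫ t in Icc 0 d, ‖g' t - u (φ' t)‖ ^ 2 ≤ (1 + C) ^ 2 * d := by
    rw [setIntegral_congr_ae measurableSet_Icc haeF1]
    calc ∫ t in Icc 0 d, ‖v - u (a + t • v)‖ ^ 2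
        ≤ ∫ _t in Icc 0 d, (1 + C) ^ 2 := by
          refine setIntegral_mono_on hcont1.integrableOn_Icc
            (integrableOn_const measure_Icc_lt_top.ne) measurableSet_Icc ?_
          intro t _
          have h1 : ‖v - u (a + t • v)‖ ≤ 1 + C :=
            (norm_sub_le _ _).trans (by linarith [hbound (a + t • v)])
          exact pow_le_pow_left₀ (norm_nonneg _) h1 2
      _ = (1 + C) ^ 2 * d := by
          rw [setIntegral_const, Real.volume_real_Icc_of_le hd0, smul_eq_mul, sub_zero,
            mul_comm]
  have heq2 : EqOn (fun t => ‖g' t - u (φ' t)‖ ^ 2)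
      (fun t => ‖g (t - d) - u (φ (t - d))‖ ^ 2) (Icc d T') := by
    intro t ht
    simp only
    rw [hg'd t ht.1, hφ'eq2 t ht]
  have hGint : IntegrableOn (fun t => ‖g t - u (φ t)‖ ^ 2) (Icc 0 T) :=
    aux_action_int hu hbound hT0 ⟨hgm, hg2, hφ⟩
  have hGtr : IntegrableOn (fun t => ‖g (t - d) - u (φ (t - d))‖ ^ 2) (Icc d T') := by
    have h1 := (aux_iiR hT0 hGint).comp_sub_right d
    rw [zero_add] at h1
    rw [← intervalIntegrable_iff_integrableOn_Icc_of_le hdT']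
    exact h1
  have hFint2 : IntegrableOn (fun t => ‖g' t - u (φ' t)‖ ^ 2) (Icc d T') :=
    hGtr.congr_fun (fun t ht => (heq2 ht).symm) measurableSet_Icc
  have hA2 : ∫ t in Icc d T', ‖g' t - u (φ' t)‖ ^ 2
      = ∫ t in Icc 0 T, ‖g t - u (φ t)‖ ^ 2 := by
    rw [setIntegral_congr_fun measurableSet_Icc heq2]
    rw [integral_Icc_eq_integral_Ioc, ← intervalIntegral.integral_of_le hdT']
    rw [intervalIntegral.integral_comp_sub_right (fun s => ‖g s - u (φ s)‖ ^ 2) d,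
      sub_self, show T' - d = T by rw [hT']; ring]
    rw [intervalIntegral.integral_of_le hT0, ← integral_Icc_eq_integral_Ioc]
  refine ⟨(1 / 4) * ∫ t in Icc 0 T', ‖g' t - u (φ' t)‖ ^ 2,
    ⟨T', hT'0, φ', g', hadm', hφ'0, hφ'T', rfl⟩, ?_⟩
  rw [aux_split hd0 hdT' hFint1 hFint2, hA2]
  linarith [hA1]

lemma aux_nonempty (u : EuclideanSpace ℝ (Fin N) → EuclideanSpace ℝ (Fin N))
    (x y : EuclideanSpace ℝ (Fin N)) : (QSet N u x y).Nonempty := by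
  refine ⟨_, 1, one_pos, fun t => x + t • (y - x), fun _ => y - x, ⟨measurable_const, ?_, ?_⟩,
    by simp, by simp, rfl⟩
  · exact integrableOn_const measure_Icc_lt_top.ne
  · intro t ht
    simp [intervalIntegral.integral_const, smul_sub]

lemma aux_bddBelow (u : EuclideanSpace ℝ (Fin N) → EuclideanSpace ℝ (Fin N))
    (x y : EuclideanSpace ℝ (Fin N)) : ∀ m ∈ QSet N u x y, (0:ℝ) ≤ m := by
  rintro m ⟨T, hT, φ, g, hadm, hx, hy, rfl⟩
  have : (0:ℝ) ≤ ∫ t in Icc 0 T, ‖g t - u (φ t)‖ ^ 2 :=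
    integral_nonneg fun t => by positivity
  linarith

lemma aux_quasi_eq (u : EuclideanSpace ℝ (Fin N) → EuclideanSpace ℝ (Fin N))
    (x y : EuclideanSpace ℝ (Fin N)) : quasipotential N u x y = sInf (QSet N u x y) := rfl

lemma aux_one_sided {u : EuclideanSpace ℝ (Fin N) → EuclideanSpace ℝ (Fin N)}
    (hu : Continuous u) {C : ℝ} (hC : 0 ≤ C) (hbound : ∀ z, ‖u z‖ ≤ C)
    (x y a b : EuclideanSpace ℝ (Fin N)) :
    quasipotential N u a b ≤ quasipotential N u x y +
      (1 + C) ^ 2 / 4 * (‖x - a‖ + ‖y - b‖) := by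
  rw [aux_quasi_eq, aux_quasi_eq]
  refine le_of_forall_pos_le_add fun ε hε => ?_
  obtain ⟨m, hm, hlt⟩ := Real.lt_sInf_add_pos (aux_nonempty u x y) hε
  obtain ⟨m1, hm1, h1⟩ := aux_prepend hu hC hbound x y a m hm
  obtain ⟨m2, hm2, h2⟩ := aux_append hu hC hbound a y b m1 hm1
  have hle : sInf (QSet N u a b) ≤ m2 := csInf_le ⟨0, aux_bddBelow u a b⟩ hm2
  rw [norm_sub_rev b y] at h2
  linarith

/-- For a bounded continuous vector field `u` with `‖u‖ ≤ C`, the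
quasipotential is Lipschitz in its two endpoint arguments with constant `L = (1+C)²/4`:
`|Q_u(x,y) − Q_u(a,b)| ≤ L·(‖a − x‖ + ‖b − y‖)`. -/
theorem quasipotential_lipschitz (N : ℕ) (hN : 1 ≤ N) (C : ℝ) (hC : 0 ≤ C)
    (u : EuclideanSpace ℝ (Fin N) → EuclideanSpace ℝ (Fin N)) (hu : Continuous u)
    (hbound : ∀ z, ‖u z‖ ≤ C) :
    ∀ x y a b : EuclideanSpace ℝ (Fin N),
      |quasipotential N u x y - quasipotential N u a b| ≤
        (1 + C) ^ 2 / 4 * (‖a - x‖ + ‖b - y‖) := by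
  intro x y a b
  have h1 := aux_one_sided hu hC hbound x y a b
  have h2 := aux_one_sided hu hC hbound a b x y
  rw [norm_sub_rev x a, norm_sub_rev y b] at h1
  rw [abs_sub_le_iff]
  constructor <;> linarith
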